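/- Let V₁, V₂ ⊆ ℝ² be open, let T : V₁ → V₂ be a C² diffeomorphism (bijective, C², with det DT(x) ≠ 0 for all x ∈ V₁), let F : V₂ → ℝ be C¹, let Q : V₁ → ℝ² be a C¹ vector field, and let P : V₂ → ℝ² be a C¹ vector field satisfying P(T(x)) = DT(x)·Q(x) for all x ∈ V₁. Define F̄ : V₁ → ℝ by F̄(x) = ln|det DT(x)| + F(T(x)). Then for every x ∈ V₁: (div P)(T(x)) + ∇F(T(x))·P(T(x)) = (div Q)(x) + ∇F̄(x)·Q(x). -/

import Mathlib

lemma det_eq (L : (ℝ×ℝ) →L[ℝ] (ℝ×ℝ)) :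
    L.det = (L (1,0)).1 * (L (0,1)).2 - (L (0,1)).1 * (L (1,0)).2 := by
  have h := LinearMap.det_toMatrix (Module.Basis.finTwoProd ℝ) (L : (ℝ×ℝ) →ₗ[ℝ] (ℝ×ℝ))
  rw [ContinuousLinearMap.det, ← h, Matrix.det_fin_two]
  simp [LinearMap.toMatrix_apply, Module.Basis.coe_finTwoProd_repr, Module.Basis.finTwoProd_zero,
    Module.Basis.finTwoProd_one]

lemma pd1 {E : Type*} [NormedAddCommGroup E] [NormedSpace ℝ E]
    (f : ℝ×ℝ → E) (z : ℝ×ℝ) (hf : DifferentiableAt ℝ f z) :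
    deriv (fun u : ℝ => f (u, z.2)) z.1 = fderiv ℝ f z (1,0) := by
  have h : HasDerivAt (fun u : ℝ => (u, z.2)) ((1:ℝ),(0:ℝ)) z.1 :=
    (hasDerivAt_id z.1).prodMk (hasDerivAt_const z.1 z.2)
  have h2 := (hf.hasFDerivAt.comp_hasDerivAt_of_eq z.1 h (by simp)).deriv
  simpa [Function.comp_def] using h2

lemma pd2 {E : Type*} [NormedAddCommGroup E] [NormedSpace ℝ E]
    (f : ℝ×ℝ → E) (z : ℝ×ℝ) (hf : DifferentiableAt ℝ f z) :
    deriv (fun v : ℝ => f (z.1, v)) z.2 = fderiv ℝ f z (0,1) := by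
  have h : HasDerivAt (fun v : ℝ => (z.1, v)) ((0:ℝ),(1:ℝ)) z.2 :=
    (hasDerivAt_const z.2 z.1).prodMk (hasDerivAt_id z.2)
  have h2 := (hf.hasFDerivAt.comp_hasDerivAt_of_eq z.2 h (by simp)).deriv
  simpa [Function.comp_def] using h2

lemma pd1_fst (X : ℝ×ℝ → ℝ×ℝ) (z : ℝ×ℝ) (hX : DifferentiableAt ℝ X z) :
    deriv (fun u : ℝ => (X (u, z.2)).1) z.1 = (fderiv ℝ X z (1,0)).1 := by
  have h := pd1 (fun w => (X w).1) z hX.fst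
  rw [fderiv.fst hX] at h
  simpa using h

lemma pd2_snd (X : ℝ×ℝ → ℝ×ℝ) (z : ℝ×ℝ) (hX : DifferentiableAt ℝ X z) :
    deriv (fun v : ℝ => (X (z.1, v)).2) z.2 = (fderiv ℝ X z (0,1)).2 := by
  have h := pd2 (fun w => (X w).2) z hX.snd
  rw [fderiv.snd hX] at h
  simpa using h

lemma Lst {E : Type*} [NormedAddCommGroup E] [NormedSpace ℝ E] (L : (ℝ×ℝ) →L[ℝ] E) (p : ℝ×ℝ) :
    L p = p.1 • L (1,0) + p.2 • L (0,1) := by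
  rw [← map_smul, ← map_smul, ← map_add]
  congr 1
  simp [Prod.ext_iff]

lemma fd_app_fst (T : ℝ×ℝ → ℝ×ℝ) (x v w : ℝ×ℝ) (hAd : DifferentiableAt ℝ (fderiv ℝ T) x) :
    fderiv ℝ (fun z => (fderiv ℝ T z w).1) x v = ((fderiv ℝ (fderiv ℝ T) x v) w).1 := by
  have h1 : DifferentiableAt ℝ (fun z => fderiv ℝ T z w) x :=
    hAd.clm_apply (differentiableAt_const _)
  rw [fderiv.fst h1, ContinuousLinearMap.comp_apply,
    fderiv_clm_apply hAd (differentiableAt_const w)]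
  simp

lemma fd_app_snd (T : ℝ×ℝ → ℝ×ℝ) (x v w : ℝ×ℝ) (hAd : DifferentiableAt ℝ (fderiv ℝ T) x) :
    fderiv ℝ (fun z => (fderiv ℝ T z w).2) x v = ((fderiv ℝ (fderiv ℝ T) x v) w).2 := by
  have h1 : DifferentiableAt ℝ (fun z => fderiv ℝ T z w) x :=
    hAd.clm_apply (differentiableAt_const _)
  rw [fderiv.snd h1, ContinuousLinearMap.comp_apply,
    fderiv_clm_apply hAd (differentiableAt_const w)]
  simp


/-- Divergence of a planar vector field, via partial derivatives. -/
noncomputable def pdiv (X : ℝ × ℝ → ℝ × ℝ) (z : ℝ × ℝ) : ℝ :=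
  deriv (fun u : ℝ => (X (u, z.2)).1) z.1 + deriv (fun v : ℝ => (X (z.1, v)).2) z.2

noncomputable def dirDeriv (F : ℝ × ℝ → ℝ) (X : ℝ × ℝ → ℝ × ℝ) (z : ℝ × ℝ) : ℝ :=
  deriv (fun u : ℝ => F (u, z.2)) z.1 * (X z).1 + deriv (fun v : ℝ => F (z.1, v)) z.2 * (X z).2

theorem stmt_8 (V₁ V₂ : Set (ℝ × ℝ)) (hV₁ : IsOpen V₁) (hV₂ : IsOpen V₂)
    (T : ℝ × ℝ → ℝ × ℝ) (hTbij : Set.BijOn T V₁ V₂) (hT : ContDiffOn ℝ 2 T V₁)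
    (hdet : ∀ x ∈ V₁, (fderiv ℝ T x).det ≠ 0)
    (F : ℝ × ℝ → ℝ) (hF : ContDiffOn ℝ 1 F V₂)
    (Q : ℝ × ℝ → ℝ × ℝ) (hQ : ContDiffOn ℝ 1 Q V₁)
    (P : ℝ × ℝ → ℝ × ℝ) (hP : ContDiffOn ℝ 1 P V₂)
    (hPT : ∀ x ∈ V₁, P (T x) = fderiv ℝ T x (Q x))
    (Fbar : ℝ × ℝ → ℝ)
    (hFbar : ∀ x ∈ V₁, Fbar x = Real.log |(fderiv ℝ T x).det| + F (T x)) :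
    ∀ x ∈ V₁,
      pdiv P (T x) + dirDeriv F P (T x) = pdiv Q x + dirDeriv Fbar Q x := by
  intro x hx
  have hyV₂ : T x ∈ V₂ := hTbij.mapsTo hx
  have hTc2 : ContDiffAt ℝ 2 T x := hT.contDiffAt (hV₁.mem_nhds hx)
  have hTx : DifferentiableAt ℝ T x := hTc2.differentiableAt two_ne_zero
  have hAc1 : ContDiffAt ℝ 1 (fderiv ℝ T) x := hTc2.fderiv_right (by norm_num)
  have hAd : DifferentiableAt ℝ (fderiv ℝ T) x := hAc1.differentiableAt one_ne_zero
  have hPd : DifferentiableAt ℝ P (T x) :=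
    (hP.contDiffAt (hV₂.mem_nhds hyV₂)).differentiableAt one_ne_zero
  have hFd : DifferentiableAt ℝ F (T x) :=
    (hF.contDiffAt (hV₂.mem_nhds hyV₂)).differentiableAt one_ne_zero
  have hQd : DifferentiableAt ℝ Q x :=
    (hQ.contDiffAt (hV₁.mem_nhds hx)).differentiableAt one_ne_zero
  -- the Jacobian as a product of partials
  set g : ℝ×ℝ → ℝ := fun z =>
    (fderiv ℝ T z (1,0)).1 * (fderiv ℝ T z (0,1)).2
      - (fderiv ℝ T z (0,1)).1 * (fderiv ℝ T z (1,0)).2 with hg_def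
  have hgT : ∀ z, (fderiv ℝ T z).det = g z := fun z => det_eq _
  have hgx0 : g x ≠ 0 := hgT x ▸ hdet x hx
  -- differentiability of the partials of T
  have ha : DifferentiableAt ℝ (fun z => (fderiv ℝ T z ((1:ℝ),(0:ℝ))).1) x :=
    (hAd.clm_apply (differentiableAt_const _)).fst
  have hb : DifferentiableAt ℝ (fun z => (fderiv ℝ T z ((0:ℝ),(1:ℝ))).1) x :=
    (hAd.clm_apply (differentiableAt_const _)).fst
  have hc : DifferentiableAt ℝ (fun z => (fderiv ℝ T z ((1:ℝ),(0:ℝ))).2) x :=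
    (hAd.clm_apply (differentiableAt_const _)).snd
  have hd : DifferentiableAt ℝ (fun z => (fderiv ℝ T z ((0:ℝ),(1:ℝ))).2) x :=
    (hAd.clm_apply (differentiableAt_const _)).snd
  have hgH : HasFDerivAt g
      (((fun z => (fderiv ℝ T z ((1:ℝ),(0:ℝ))).1) x •
          fderiv ℝ (fun z => (fderiv ℝ T z ((0:ℝ),(1:ℝ))).2) x +
        (fun z => (fderiv ℝ T z ((0:ℝ),(1:ℝ))).2) x •
          fderiv ℝ (fun z => (fderiv ℝ T z ((1:ℝ),(0:ℝ))).1) x) -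
       ((fun z => (fderiv ℝ T z ((0:ℝ),(1:ℝ))).1) x •
          fderiv ℝ (fun z => (fderiv ℝ T z ((1:ℝ),(0:ℝ))).2) x +
        (fun z => (fderiv ℝ T z ((1:ℝ),(0:ℝ))).2) x •
          fderiv ℝ (fun z => (fderiv ℝ T z ((0:ℝ),(1:ℝ))).1) x)) x :=
    ((ha.hasFDerivAt.mul hd.hasFDerivAt).sub (hb.hasFDerivAt.mul hc.hasFDerivAt))
  have hgd : DifferentiableAt ℝ g x := hgH.differentiableAt
  -- the derivative of Fbar
  have hlogH : HasFDerivAt (fun z => Real.log (g z)) ((g x)⁻¹ • fderiv ℝ g x) x := by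
    have := (Real.hasDerivAt_log hgx0).comp_hasFDerivAt x hgd.hasFDerivAt
    simpa [hgH.fderiv, Function.comp_def] using this
  have hFTH : HasFDerivAt (fun z => F (T z))
      ((fderiv ℝ F (T x)).comp (fderiv ℝ T x)) x :=
    hFd.hasFDerivAt.comp x hTx.hasFDerivAt
  have hFbarEv : Fbar =ᶠ[nhds x] fun z => Real.log (g z) + F (T z) := by
    filter_upwards [hV₁.mem_nhds hx] with z hz
    rw [hFbar z hz, hgT z, Real.log_abs]
  have hFbarH : HasFDerivAt Fbar
      ((g x)⁻¹ • fderiv ℝ g x + (fderiv ℝ F (T x)).comp (fderiv ℝ T x)) x :=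
    (hlogH.add hFTH).congr_of_eventuallyEq hFbarEv
  have hFbard : DifferentiableAt ℝ Fbar x := hFbarH.differentiableAt
  -- key identity from differentiating P ∘ T = DT · Q
  have hev : (fun z => P (T z)) =ᶠ[nhds x] (fun z => fderiv ℝ T z (Q z)) := by
    filter_upwards [hV₁.mem_nhds hx] with z hz
    exact hPT z hz
  have h1 : fderiv ℝ (fun z => P (T z)) x =
      (fderiv ℝ P (T x)).comp (fderiv ℝ T x) :=
    (hPd.hasFDerivAt.comp x hTx.hasFDerivAt).fderiv
  have h3 := hev.fderiv_eq (𝕜 := ℝ)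
  rw [h1, fderiv_clm_apply hAd hQd] at h3
  have happ : ∀ v : ℝ×ℝ, fderiv ℝ P (T x) (fderiv ℝ T x v) =
      fderiv ℝ T x (fderiv ℝ Q x v) + fderiv ℝ (fderiv ℝ T) x v (Q x) := by
    intro v
    have := congrArg (fun (L : (ℝ×ℝ) →L[ℝ] (ℝ×ℝ)) => L v) h3
    simpa using this
  -- scalar equations
  have eqv1 := happ (1,0)
  have eqv2 := happ (0,1)
  rw [Lst (fderiv ℝ P (T x)) (fderiv ℝ T x (1,0)),
      Lst (fderiv ℝ T x) (fderiv ℝ Q x (1,0)),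
      Lst (fderiv ℝ (fderiv ℝ T) x (1,0)) (Q x)] at eqv1
  rw [Lst (fderiv ℝ P (T x)) (fderiv ℝ T x (0,1)),
      Lst (fderiv ℝ T x) (fderiv ℝ Q x (0,1)),
      Lst (fderiv ℝ (fderiv ℝ T) x (0,1)) (Q x)] at eqv2
  have eq1 := congrArg Prod.fst eqv1
  have eq2 := congrArg Prod.snd eqv1
  have eq3 := congrArg Prod.fst eqv2
  have eq4 := congrArg Prod.snd eqv2
  simp only [Prod.fst_add, Prod.snd_add, Prod.smul_fst, Prod.smul_snd, smul_eq_mul] at eq1 eq2 eq3 eq4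
  -- symmetry of second derivative
  have hsym := hTc2.isSymmSndFDerivAt (by simp [minSmoothness_of_isRCLikeNormedField])
  have hs1 : (fderiv ℝ (fderiv ℝ T) x (0,1) (1,0)).1 =
      (fderiv ℝ (fderiv ℝ T) x (1,0) (0,1)).1 := congrArg Prod.fst (hsym (0,1) (1,0))
  have hs2 : (fderiv ℝ (fderiv ℝ T) x (0,1) (1,0)).2 =
      (fderiv ℝ (fderiv ℝ T) x (1,0) (0,1)).2 := congrArg Prod.snd (hsym (0,1) (1,0))
  rw [hs1] at eq3
  rw [hs2] at eq4
  -- P (T x) components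
  have hPy := hPT x hx
  rw [Lst (fderiv ℝ T x) (Q x)] at hPy
  have hPy1 := congrArg Prod.fst hPy
  have hPy2 := congrArg Prod.snd hPy
  simp only [Prod.fst_add, Prod.snd_add, Prod.smul_fst, Prod.smul_snd, smul_eq_mul] at hPy1 hPy2
  -- Fbar partials
  have hG1 : fderiv ℝ g x (1,0) =
      (fderiv ℝ T x ((1:ℝ),(0:ℝ))).1 * (fderiv ℝ (fderiv ℝ T) x (1,0) (0,1)).2 +
      (fderiv ℝ T x ((0:ℝ),(1:ℝ))).2 * (fderiv ℝ (fderiv ℝ T) x (1,0) (1,0)).1 -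
      ((fderiv ℝ T x ((0:ℝ),(1:ℝ))).1 * (fderiv ℝ (fderiv ℝ T) x (1,0) (1,0)).2 +
       (fderiv ℝ T x ((1:ℝ),(0:ℝ))).2 * (fderiv ℝ (fderiv ℝ T) x (1,0) (0,1)).1) := by
    rw [hgH.fderiv]
    simp only [ContinuousLinearMap.sub_apply, ContinuousLinearMap.add_apply,
      ContinuousLinearMap.smul_apply, smul_eq_mul,
      fd_app_fst T x _ _ hAd, fd_app_snd T x _ _ hAd]
  have hG2 : fderiv ℝ g x (0,1) =
      (fderiv ℝ T x ((1:ℝ),(0:ℝ))).1 * (fderiv ℝ (fderiv ℝ T) x (0,1) (0,1)).2 +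
      (fderiv ℝ T x ((0:ℝ),(1:ℝ))).2 * (fderiv ℝ (fderiv ℝ T) x (1,0) (0,1)).1 -
      ((fderiv ℝ T x ((0:ℝ),(1:ℝ))).1 * (fderiv ℝ (fderiv ℝ T) x (1,0) (0,1)).2 +
       (fderiv ℝ T x ((1:ℝ),(0:ℝ))).2 * (fderiv ℝ (fderiv ℝ T) x (0,1) (0,1)).1) := by
    rw [hgH.fderiv]
    simp only [ContinuousLinearMap.sub_apply, ContinuousLinearMap.add_apply,
      ContinuousLinearMap.smul_apply, smul_eq_mul,
      fd_app_fst T x _ _ hAd, fd_app_snd T x _ _ hAd, hs1, hs2]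
  have hW1 : fderiv ℝ Fbar x (1,0) = (g x)⁻¹ * fderiv ℝ g x (1,0) +
      ((fderiv ℝ T x ((1:ℝ),(0:ℝ))).1 * fderiv ℝ F (T x) (1,0) +
       (fderiv ℝ T x ((1:ℝ),(0:ℝ))).2 * fderiv ℝ F (T x) (0,1)) := by
    rw [hFbarH.fderiv]
    simp only [ContinuousLinearMap.add_apply, ContinuousLinearMap.smul_apply,
      ContinuousLinearMap.comp_apply, smul_eq_mul]
    rw [Lst (fderiv ℝ F (T x)) (fderiv ℝ T x (1,0))]
    simp [smul_eq_mul]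
  have hW2 : fderiv ℝ Fbar x (0,1) = (g x)⁻¹ * fderiv ℝ g x (0,1) +
      ((fderiv ℝ T x ((0:ℝ),(1:ℝ))).1 * fderiv ℝ F (T x) (1,0) +
       (fderiv ℝ T x ((0:ℝ),(1:ℝ))).2 * fderiv ℝ F (T x) (0,1)) := by
    rw [hFbarH.fderiv]
    simp only [ContinuousLinearMap.add_apply, ContinuousLinearMap.smul_apply,
      ContinuousLinearMap.comp_apply, smul_eq_mul]
    rw [Lst (fderiv ℝ F (T x)) (fderiv ℝ T x (0,1))]
    simp [smul_eq_mul]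
  -- rewrite the goal in terms of fderiv
  simp only [pdiv, dirDeriv]
  rw [pd1_fst P (T x) hPd, pd2_snd P (T x) hPd, pd1_fst Q x hQd, pd2_snd Q x hQd,
    pd1 F (T x) hFd, pd2 F (T x) hFd, pd1 Fbar x hFbard, pd2 Fbar x hFbard]
  -- abbreviations
  set a := (fderiv ℝ T x ((1:ℝ),(0:ℝ))).1
  set b := (fderiv ℝ T x ((0:ℝ),(1:ℝ))).1
  set c := (fderiv ℝ T x ((1:ℝ),(0:ℝ))).2
  set d := (fderiv ℝ T x ((0:ℝ),(1:ℝ))).2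
  set q1 := (Q x).1
  set q2 := (Q x).2
  set F1 := fderiv ℝ F (T x) (1,0)
  set F2 := fderiv ℝ F (T x) (0,1)
  set G1 := fderiv ℝ g x (1,0)
  set G2 := fderiv ℝ g x (0,1)
  have hgxv : g x = a * d - b * c := rfl
  have hW1' : (a * d - b * c) * fderiv ℝ Fbar x (1,0) =
      G1 + (a * d - b * c) * (a * F1 + c * F2) := by
    rw [hW1, ← hgxv]
    field_simp
  have hW2' : (a * d - b * c) * fderiv ℝ Fbar x (0,1) =
      G2 + (a * d - b * c) * (b * F1 + d * F2) := by
    rw [hW2, ← hgxv]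
    field_simp
  have hJne : a * d - b * c ≠ 0 := by rw [← hgxv]; exact hgx0
  refine mul_left_cancel₀ hJne ?_
  linear_combination d * eq1 - c * eq3 - b * eq2 + a * eq4 +
    ((a*d - b*c) * F1) * hPy1 + ((a*d - b*c) * F2) * hPy2 - q1 * hW1' - q2 * hW2' +
    - q1 * hG1 - q2 * hG2
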